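/- The gradient of the smoothed hinge loss F^τ(β, β_0), given by ∇F^τ(β, β_0) = −(1/2) Σ_{i=1}^n (1 + w_i^τ) y_i x̃_i with x̃_i = (x_i, 1) and w_i^τ = min(1, |z_i|/(2τ)) sign(z_i), z_i = 1 − y_i(x̃_i^T(β,β_0)), is Lipschitz continuous with constant C^τ = σ_max(X̃^T X̃)/(4τ), where X̃ is the n×(p+1) matrix with rows x̃_i and σ_max denotes the largest eigenvalue. -/

import Mathlib

lemma clamp_lip (a b : ℝ) : |max (-1:ℝ) (min 1 a) - max (-1) (min 1 b)| ≤ |a - b| := by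
  rw [max_comm (-1 : ℝ), max_comm (-1 : ℝ)]
  refine (abs_max_sub_max_le_abs _ _ _).trans ?_
  refine (abs_min_sub_min_le_max 1 a 1 b).trans ?_
  simp

lemma clamp_eq (c t : ℝ) (hc : 0 < c) :
    min 1 (|t| / c) * Real.sign t = max (-1) (min 1 (t / c)) := by
  rcases lt_trichotomy t 0 with ht | ht | ht
  · rw [Real.sign_of_neg ht, abs_of_neg ht]
    have h1 : t / c < 0 := div_neg_of_neg_of_pos ht hc
    have h2 : min 1 (t/c) = t/c := min_eq_right (by linarith)
    rw [h2, neg_div]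
    rcases le_total 1 (-(t/c)) with h | h
    · rw [min_eq_left h, max_eq_left (by linarith)]; ring
    · rw [min_eq_right h, max_eq_right (by linarith)]; ring
  · simp [ht, hc.ne']
  · rw [Real.sign_of_pos ht, abs_of_pos ht, mul_one]
    have h1 : 0 < t / c := div_pos ht hc
    rw [max_eq_right]
    rcases le_total 1 (t/c) with h | h
    · rw [min_eq_left h]; norm_num
    · rw [min_eq_right h]; linarith

open Matrix in
lemma quad_form_le {m : ℕ} (A : Matrix (Fin m) (Fin m) ℝ) (hA : A.IsHermitian)
    (w : Fin m → ℝ) : w ⬝ᵥ A *ᵥ w ≤ (⨆ k, hA.eigenvalues k) * (w ⬝ᵥ w) := by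
  classical
  set U : Matrix (Fin m) (Fin m) ℝ := (hA.eigenvectorUnitary : Matrix (Fin m) (Fin m) ℝ) with hU
  have hUU' : U * star U = 1 := (Matrix.mem_unitaryGroup_iff.mp (hA.eigenvectorUnitary).2)
  set c : Fin m → ℝ := star U *ᵥ w with hc
  have hstar : star U = Uᵀ := by
    ext i j; simp [Matrix.star_apply]
  have hvm : w ᵥ* U = c := by
    rw [hc, hstar, ← Matrix.vecMul_transpose, Matrix.transpose_transpose]
  have hcc : c ⬝ᵥ c = w ⬝ᵥ w := by
    calc c ⬝ᵥ c = (w ᵥ* U) ⬝ᵥ (star U *ᵥ w) := by rw [hvm]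
    _ = w ⬝ᵥ (U * star U) *ᵥ w := by
        rw [← Matrix.dotProduct_mulVec, Matrix.mulVec_mulVec, Matrix.dotProduct_mulVec]
    _ = w ⬝ᵥ w := by rw [hUU', Matrix.one_mulVec]
  have key : w ⬝ᵥ A *ᵥ w = ∑ k, hA.eigenvalues k * (c k)^2 := by
    conv_lhs => rw [hA.spectral_theorem]
    rw [Unitary.conjStarAlgAut_apply, ← Matrix.mulVec_mulVec, ← Matrix.mulVec_mulVec, Matrix.dotProduct_mulVec, hvm]
    rw [dotProduct]
    apply Finset.sum_congr rfl
    intro k _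
    rw [show (star (hA.eigenvectorUnitary : Matrix (Fin m) (Fin m) ℝ) *ᵥ w) = c from rfl,
      Matrix.mulVec_diagonal]
    simp only [Function.comp_apply, RCLike.ofReal_real_eq_id, id_eq]
    ring
  rw [key]
  have hb : BddAbove (Set.range hA.eigenvalues) := Set.Finite.bddAbove (Set.finite_range _)
  calc ∑ k, hA.eigenvalues k * (c k)^2 ≤ ∑ k, (⨆ k, hA.eigenvalues k) * (c k)^2 := by
        apply Finset.sum_le_sum
        intro k _
        exact mul_le_mul_of_nonneg_right (le_ciSup hb k) (sq_nonneg _)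
  _ = (⨆ k, hA.eigenvalues k) * (w ⬝ᵥ w) := by
        rw [← Finset.mul_sum, ← hcc, dotProduct]
        simp [pow_two]

open Matrix in
lemma key_lip {n m : ℕ} (X : Matrix (Fin n) (Fin m) ℝ) (σ : ℝ) (hσ0 : 0 ≤ σ)
    (hquad : ∀ w : Fin m → ℝ, (X *ᵥ w) ⬝ᵥ (X *ᵥ w) ≤ σ * (w ⬝ᵥ w))
    (τ : ℝ) (hτ : 0 < τ)
    (d : Fin n → ℝ) (u g : Fin m → ℝ)
    (hd : ∀ i, |d i| ≤ |(X *ᵥ u) i| / (2*τ))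
    (hg : ∀ k, g k = -(1/2) * ∑ i, d i * X i k) :
    Real.sqrt (∑ k, g k ^ 2) ≤ (σ/(4*τ)) * Real.sqrt (∑ k, u k ^ 2) := by
  set G := ∑ k, g k ^ 2 with hG
  set Uq : ℝ := ∑ k, u k ^ 2 with hUq
  have hGnn : 0 ≤ G := Finset.sum_nonneg fun _ _ => sq_nonneg _
  have hUnn : 0 ≤ Uq := Finset.sum_nonneg fun _ _ => sq_nonneg _
  have hdot : ∀ (v : Fin n → ℝ), v ⬝ᵥ v = ∑ i, v i ^ 2 := by
    intro v; rw [dotProduct]; apply Finset.sum_congr rfl; intro i _; ring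
  have hdotm : ∀ (v : Fin m → ℝ), v ⬝ᵥ v = ∑ k, v k ^ 2 := by
    intro v; rw [dotProduct]; apply Finset.sum_congr rfl; intro i _; ring
  have h1 : G = -(1/2) * ∑ i, d i * (X *ᵥ g) i := by
    rw [hG]
    calc ∑ k, g k ^ 2 = ∑ k, (-(1/2) * ∑ i, d i * X i k) * g k := by
          apply Finset.sum_congr rfl; intro k _; rw [← hg k]; ring
    _ = -(1/2) * ∑ k, ∑ i, d i * (X i k * g k) := by
          rw [Finset.mul_sum]; apply Finset.sum_congr rfl; intro k _
          rw [mul_assoc, Finset.sum_mul]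
          congr 1
          exact Finset.sum_congr rfl fun i _ => mul_assoc _ _ _
    _ = -(1/2) * ∑ i, d i * (X *ᵥ g) i := by
          rw [Finset.sum_comm]
          congr 1
          apply Finset.sum_congr rfl; intro i _
          rw [Matrix.mulVec, dotProduct, Finset.mul_sum]
  have habs : G ≤ (1/2) * |∑ i, d i * (X *ᵥ g) i| := by
    have := neg_abs_le (∑ i, d i * (X *ᵥ g) i)
    linarith [h1.le]
  have hCS : |∑ i, d i * (X *ᵥ g) i| ≤
      Real.sqrt (∑ i, d i ^ 2) * Real.sqrt (∑ i, ((X *ᵥ g) i) ^ 2) := by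
    have h := Finset.sum_mul_sq_le_sq_mul_sq Finset.univ d (fun i => (X *ᵥ g) i)
    calc |∑ i, d i * (X *ᵥ g) i| = Real.sqrt ((∑ i, d i * (X *ᵥ g) i) ^ 2) :=
          (Real.sqrt_sq_eq_abs _).symm
    _ ≤ Real.sqrt ((∑ i, d i ^ 2) * ∑ i, ((X *ᵥ g) i) ^ 2) := Real.sqrt_le_sqrt h
    _ = _ := Real.sqrt_mul (Finset.sum_nonneg fun _ _ => sq_nonneg _) _
  have hA : ∑ i, d i ^ 2 ≤ σ * Uq / (4 * τ ^ 2) := by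
    have step1 : ∑ i, d i ^ 2 ≤ ∑ i, ((X *ᵥ u) i) ^ 2 / (4 * τ ^ 2) := by
      apply Finset.sum_le_sum
      intro i _
      have h2 := hd i
      have h3 : d i ^ 2 ≤ (|(X *ᵥ u) i| / (2 * τ)) ^ 2 := by
        rw [← sq_abs (d i)]
        exact pow_le_pow_left₀ (abs_nonneg _) h2 2
      calc d i ^ 2 ≤ (|(X *ᵥ u) i| / (2 * τ)) ^ 2 := h3
      _ = ((X *ᵥ u) i) ^ 2 / (4 * τ ^ 2) := by rw [div_pow, sq_abs]; ring_nf
    have step2 : ∑ i, ((X *ᵥ u) i) ^ 2 ≤ σ * Uq := by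
      have := hquad u
      rw [hdot, hdotm] at this
      exact this
    calc ∑ i, d i ^ 2 ≤ ∑ i, ((X *ᵥ u) i) ^ 2 / (4 * τ ^ 2) := step1
    _ = (∑ i, ((X *ᵥ u) i) ^ 2) / (4 * τ ^ 2) := by rw [Finset.sum_div]
    _ ≤ σ * Uq / (4 * τ ^ 2) := by gcongr
  have hB : ∑ i, ((X *ᵥ g) i) ^ 2 ≤ σ * G := by
    have := hquad g
    rw [hdot, hdotm] at this
    exact this
  have hσs : Real.sqrt σ * Real.sqrt σ = σ := Real.mul_self_sqrt hσ0
  have hs1 : Real.sqrt (∑ i, d i ^ 2) ≤ Real.sqrt σ * Real.sqrt Uq / (2 * τ) := by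
    calc Real.sqrt (∑ i, d i ^ 2) ≤ Real.sqrt (σ * Uq / (4 * τ ^ 2)) := Real.sqrt_le_sqrt hA
    _ = Real.sqrt (σ * Uq) / Real.sqrt (4 * τ ^ 2) := by
        rw [Real.sqrt_div (by positivity)]
    _ = Real.sqrt σ * Real.sqrt Uq / (2 * τ) := by
        rw [Real.sqrt_mul hσ0, show (4 : ℝ) * τ ^ 2 = (2 * τ) ^ 2 by ring,
          Real.sqrt_sq (by positivity)]
  have hs2 : Real.sqrt (∑ i, ((X *ᵥ g) i) ^ 2) ≤ Real.sqrt σ * Real.sqrt G := by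
    calc Real.sqrt (∑ i, ((X *ᵥ g) i) ^ 2) ≤ Real.sqrt (σ * G) := Real.sqrt_le_sqrt hB
    _ = _ := Real.sqrt_mul hσ0 _
  have hfin : G ≤ σ / (4 * τ) * Real.sqrt Uq * Real.sqrt G := by
    have step : G ≤ (1/2) * (Real.sqrt σ * Real.sqrt Uq / (2 * τ) * (Real.sqrt σ * Real.sqrt G)) := by
      refine habs.trans ?_
      calc (1/2) * |∑ i, d i * (X *ᵥ g) i|
          ≤ (1/2) * (Real.sqrt (∑ i, d i ^ 2) * Real.sqrt (∑ i, ((X *ᵥ g) i) ^ 2)) :=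
            mul_le_mul_of_nonneg_left hCS (by norm_num)
      _ ≤ (1/2) * (Real.sqrt σ * Real.sqrt Uq / (2 * τ) * (Real.sqrt σ * Real.sqrt G)) :=
            mul_le_mul_of_nonneg_left
              (mul_le_mul hs1 hs2 (Real.sqrt_nonneg _) (by positivity)) (by norm_num)
    refine step.trans_eq ?_
    have hτ' : τ ≠ 0 := hτ.ne'
    field_simp
    linear_combination (Real.sqrt Uq * Real.sqrt G * 4) * hσs
  obtain h0 | h0 := (Real.sqrt_nonneg G).eq_or_lt
  · rw [← h0]
    positivity
  · have hG' : Real.sqrt G * Real.sqrt G = G := Real.mul_self_sqrt hGnn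
    have h5 : Real.sqrt G * Real.sqrt G ≤ σ / (4 * τ) * Real.sqrt Uq * Real.sqrt G := by
      rw [hG']; exact hfin
    exact le_of_mul_le_mul_right h5 h0

theorem stmt19 {n p : ℕ} (x : Fin n → Fin p → ℝ) (y : Fin n → ℝ)
    (hy : ∀ i, y i = 1 ∨ y i = -1)
    (τ : ℝ) (hτ : 0 < τ)
    (Xt : Matrix (Fin n) (Fin (p + 1)) ℝ)
    (hXt : ∀ i (k : Fin (p + 1)), Xt i k = if h : (k : ℕ) < p then x i ⟨k, h⟩ else 1)
    (σmax : ℝ)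
    (hσ : σmax = ⨆ k, (Matrix.isHermitian_conjTranspose_mul_self Xt).eigenvalues k)
    (grad : (Fin p → ℝ) × ℝ → (Fin p → ℝ) × ℝ)
    (hgrad : ∀ (β : Fin p → ℝ) (β0 : ℝ), grad (β, β0) =
      (fun j => -(1/2) * ∑ i,
        (1 + min 1 (|1 - y i * (∑ j', x i j' * β j' + β0)| / (2 * τ))
            * Real.sign (1 - y i * (∑ j', x i j' * β j' + β0))) * y i * x i j,
       -(1/2) * ∑ i,
        (1 + min 1 (|1 - y i * (∑ j', x i j' * β j' + β0)| / (2 * τ))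
            * Real.sign (1 - y i * (∑ j', x i j' * β j' + β0))) * y i)) :
    ∀ (β : Fin p → ℝ) (β0 : ℝ) (β' : Fin p → ℝ) (β0' : ℝ),
      Real.sqrt (∑ j, ((grad (β, β0)).1 j - (grad (β', β0')).1 j) ^ 2
          + ((grad (β, β0)).2 - (grad (β', β0')).2) ^ 2)
        ≤ (σmax / (4 * τ))
          * Real.sqrt (∑ j, (β j - β' j) ^ 2 + (β0 - β0') ^ 2) := by
  classical
  intro β β0 β' β0'
  have hcast : ∀ (j : Fin p) (h : ((Fin.castSucc j : Fin (p+1)) : ℕ) < p),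
      (⟨((Fin.castSucc j : Fin (p+1)) : ℕ), h⟩ : Fin p) = j := by
    intro j h; ext; simp
  -- basic facts about Xt columns
  have hXtC : ∀ i (j : Fin p), Xt i (Fin.castSucc j) = x i j := by
    intro i j
    rw [hXt, dif_pos (by simpa using j.isLt), hcast]
  have hXtL : ∀ i, Xt i (Fin.last p) = 1 := by
    intro i
    rw [hXt, dif_neg (by simp)]
  -- nonnegativity of σmax
  have hσ0 : 0 ≤ σmax := by
    have hps := Matrix.posSemidef_conjTranspose_mul_self Xt
    have h0 : (0 : ℝ) ≤ (Matrix.isHermitian_conjTranspose_mul_self Xt).eigenvalues 0 :=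
      hps.eigenvalues_nonneg 0
    rw [hσ]
    exact le_trans h0 (le_ciSup (Set.Finite.bddAbove (Set.finite_range _)) 0)
  -- the quadratic form bound
  have hquad : ∀ w : Fin (p+1) → ℝ,
      dotProduct (Matrix.mulVec Xt w) (Matrix.mulVec Xt w)
        ≤ σmax * dotProduct w w := by
    intro w
    have h := quad_form_le (Xt.conjTranspose * Xt)
      (Matrix.isHermitian_conjTranspose_mul_self Xt) w
    have he : Xt.conjTranspose = Xt.transpose := by
      ext i j; simp [Matrix.conjTranspose_apply]
    have he2 : dotProduct w (Matrix.mulVec (Xt.conjTranspose * Xt) w)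
        = dotProduct (Matrix.mulVec Xt w) (Matrix.mulVec Xt w) := by
      rw [he, ← Matrix.mulVec_mulVec, Matrix.dotProduct_mulVec, Matrix.vecMul_transpose]
    rw [he2] at h
    rw [hσ]
    exact h
  -- the relevant vectors
  set u : Fin (p+1) → ℝ :=
    fun k => if h : (k : ℕ) < p then β ⟨k, h⟩ - β' ⟨k, h⟩ else β0 - β0' with hu
  set d : Fin n → ℝ := fun i =>
    (min 1 (|1 - y i * (∑ j', x i j' * β j' + β0)| / (2 * τ))
        * Real.sign (1 - y i * (∑ j', x i j' * β j' + β0))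
      - min 1 (|1 - y i * (∑ j', x i j' * β' j' + β0')| / (2 * τ))
        * Real.sign (1 - y i * (∑ j', x i j' * β' j' + β0'))) * y i with hdd
  set g : Fin (p+1) → ℝ := fun k => -(1/2) * ∑ i, d i * Xt i k with hgg
  have huc : ∀ j : Fin p, u (Fin.castSucc j) = β j - β' j := by
    intro j
    simp only [hu]
    rw [dif_pos (by simpa using j.isLt), hcast]
  have hul : u (Fin.last p) = β0 - β0' := by
    simp only [hu]
    rw [dif_neg (by simp)]
  have hXu : ∀ i, Matrix.mulVec Xt u i
      = (∑ j', x i j' * β j' + β0) - (∑ j', x i j' * β' j' + β0') := by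
    intro i
    show ∑ k, Xt i k * u k = _
    rw [Fin.sum_univ_castSucc]
    have h1 : ∀ j : Fin p, Xt i (Fin.castSucc j) * u (Fin.castSucc j)
        = x i j * β j - x i j * β' j := by
      intro j
      rw [hXtC, huc]
      ring
    have h2 : Xt i (Fin.last p) * u (Fin.last p) = β0 - β0' := by
      rw [hXtL, hul]
      ring
    rw [h2, Finset.sum_congr rfl (fun j _ => h1 j), Finset.sum_sub_distrib]
    ring
  have hd : ∀ i, |d i| ≤ |Matrix.mulVec Xt u i| / (2 * τ) := by
    intro i
    have hyi : |y i| = 1 := by rcases hy i with h | h <;> simp [h]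
    have h2τ : (0:ℝ) < 2 * τ := by positivity
    set z : ℝ := 1 - y i * (∑ j', x i j' * β j' + β0) with hz
    set z' : ℝ := 1 - y i * (∑ j', x i j' * β' j' + β0') with hz'
    have hdi : d i = (min 1 (|z| / (2 * τ)) * Real.sign z
        - min 1 (|z'| / (2 * τ)) * Real.sign z') * y i := rfl
    have hzz : |z - z'| = |Matrix.mulVec Xt u i| := by
      have : z - z' = -(y i * (Matrix.mulVec Xt u i)) := by
        rw [hXu i, hz, hz']; ring
      rw [this, abs_neg, abs_mul, hyi, one_mul]
    rw [hdi, abs_mul, hyi, mul_one, clamp_eq _ _ h2τ, clamp_eq _ _ h2τ]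
    calc |max (-1) (min 1 (z / (2*τ))) - max (-1) (min 1 (z' / (2*τ)))|
        ≤ |z / (2*τ) - z' / (2*τ)| := clamp_lip _ _
    _ = |z - z'| / (2 * τ) := by
        rw [div_sub_div_same, abs_div, abs_of_pos h2τ]
    _ = |Matrix.mulVec Xt u i| / (2 * τ) := by rw [hzz]
  have hg1 : ∀ j, (grad (β, β0)).1 j - (grad (β', β0')).1 j = g (Fin.castSucc j) := by
    intro j
    rw [hgrad β β0, hgrad β' β0']
    simp only [hgg, hdd, hXtC]
    rw [← mul_sub, ← Finset.sum_sub_distrib]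
    congr 1
    apply Finset.sum_congr rfl
    intro i _
    ring
  have hg2 : (grad (β, β0)).2 - (grad (β', β0')).2 = g (Fin.last p) := by
    rw [hgrad β β0, hgrad β' β0']
    simp only [hgg, hdd, hXtL]
    rw [← mul_sub, ← Finset.sum_sub_distrib]
    congr 1
    apply Finset.sum_congr rfl
    intro i _
    ring
  have hL : ∑ j, ((grad (β, β0)).1 j - (grad (β', β0')).1 j) ^ 2
      + ((grad (β, β0)).2 - (grad (β', β0')).2) ^ 2 = ∑ k, g k ^ 2 := by
    rw [Fin.sum_univ_castSucc (f := fun k => g k ^ 2), hg2]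
    congr 1
    apply Finset.sum_congr rfl
    intro j _
    rw [hg1]
  have hR : ∑ j, (β j - β' j) ^ 2 + (β0 - β0') ^ 2 = ∑ k, u k ^ 2 := by
    rw [Fin.sum_univ_castSucc (f := fun k => u k ^ 2), hul]
    congr 1
    apply Finset.sum_congr rfl
    intro j _
    rw [huc]
  rw [hL, hR]
  exact key_lip Xt σmax hσ0 hquad τ hτ d u g hd (fun k => rfl)
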